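/- Let λ > 0 and V*_λ := (Σ + λI − γΣ₁)^{-1} b. Assume V* ∈ H satisfies the unregularized fixed-point equation b + (γΣ₁ − Σ)V* = 0, and assume the source condition: there exist θ ∈ [0,1] and W ∈ H with V* = Σ^{θ/2} W, where Σ^{θ/2} is obtained by applying the continuous functional calculus of Σ to the function t ↦ t^{θ/2}. Then ‖Σ^{1/2}(V*_λ − V*)‖ ≤ (λ^{(1+θ)/2} / (1 − γ)) · ‖W‖. -/

import Mathlib

open scoped InnerProductSpace
set_option maxHeartbeats 1000000
open scoped InnerProductSpace

section Aux
variable {H : Type*} [NormedAddCommGroup H] [InnerProductSpace ℝ H] [CompleteSpace H]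
variable (φ : C(ℝ, ℝ) →⋆ₐ[ℝ] (H →L[ℝ] H))

lemma phi_symm (f : C(ℝ, ℝ)) (x y : H) : ⟪(φ f) x, y⟫_ℝ = ⟪x, (φ f) y⟫_ℝ := by
  have h : IsSelfAdjoint (φ f) := by
    rw [IsSelfAdjoint, ← map_star, star_trivial]
  exact (ContinuousLinearMap.isSelfAdjoint_iff_isSymmetric.mp h) x y

lemma phi_pos (f : C(ℝ, ℝ)) (hf : ∀ t, 0 ≤ f t) (x : H) : 0 ≤ ⟪x, (φ f) x⟫_ℝ := by
  set r : C(ℝ, ℝ) := ⟨fun t => Real.sqrt (f t), Real.continuous_sqrt.comp f.continuous⟩ with hr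
  have hrr : r * r = f := by
    ext t
    exact Real.mul_self_sqrt (hf t)
  have : (φ f) x = (φ r) ((φ r) x) := by
    rw [← hrr, map_mul]; rfl
  rw [this, ← phi_symm]
  exact real_inner_self_nonneg

noncomputable def cutk (ε : ℝ) : C(ℝ, ℝ) :=
  ⟨fun t => min 1 (max 0 ((-(ε/2) - t) * (2/ε))), by fun_prop⟩

lemma cutk_nonneg (ε t : ℝ) : 0 ≤ cutk ε t := le_min one_pos.le (le_max_left _ _)

lemma cutk_le_one (ε t : ℝ) : cutk ε t ≤ 1 := min_le_left _ _

lemma cutk_eq_one {ε t : ℝ} (hε : 0 < ε) (ht : t ≤ -ε) : cutk ε t = 1 := by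
  have h1 : (1:ℝ) ≤ (-(ε/2) - t) * (2/ε) := by
    have h2 : ε/2 ≤ -(ε/2) - t := by linarith
    have h3 : (0:ℝ) < 2/ε := by positivity
    calc (1:ℝ) = (ε/2) * (2/ε) := by field_simp
    _ ≤ (-(ε/2) - t) * (2/ε) := by nlinarith
  show min 1 (max 0 ((-(ε/2) - t) * (2/ε))) = 1
  exact min_eq_left (le_trans h1 (le_max_right _ _))

lemma cutk_eq_zero {ε t : ℝ} (hε : 0 < ε) (ht : -(ε/2) ≤ t) : cutk ε t = 0 := by
  have h1 : (-(ε/2) - t) * (2/ε) ≤ 0 := by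
    have h3 : (0:ℝ) < 2/ε := by positivity
    nlinarith
  show min 1 (max 0 ((-(ε/2) - t) * (2/ε))) = 0
  rw [max_eq_left h1, min_eq_right zero_le_one]

/-- cutk itself is killed by φ when Σ is positive. -/
lemma phi_cutk_zero (Sig : H →L[ℝ] H) (hφid : φ (ContinuousMap.id ℝ) = Sig)
    (hSigPos : ∀ f : H, 0 ≤ ⟪f, Sig f⟫_ℝ) {ε : ℝ} (hε : 0 < ε) (x : H) :
    (φ (cutk ε)) x = 0 := by
  set k := cutk ε with hk
  -- m = k * id * k; d = (-(ε/2)) • (k*k) - m is pointwise nonneg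
  set m : C(ℝ, ℝ) := k * ContinuousMap.id ℝ * k with hm
  have hd : ∀ t, 0 ≤ ((-(ε/2)) • (k * k) - m) t := by
    intro t
    have hmt : m t = k t * t * k t := rfl
    have hkkt : ((-(ε/2)) • (k * k)) t = -(ε/2) * (k t * k t) := rfl
    simp only [ContinuousMap.sub_apply, hmt, hkkt]
    rcases le_or_gt (-(ε/2)) t with h | h
    · rw [cutk_eq_zero hε h]; ring_nf; exact le_refl 0
    · have h1 : 0 ≤ -(ε/2) - t := by linarith
      have h2 : 0 ≤ k t * k t := mul_nonneg (cutk_nonneg ε t) (cutk_nonneg ε t)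
      nlinarith
  have hpos := phi_pos φ _ hd x
  have hmx : (φ m) x = (φ k) (Sig ((φ k) x)) := by
    rw [hm, map_mul, map_mul, hφid]; rfl
  have hmq : ⟪x, (φ m) x⟫_ℝ = ⟪(φ k) x, Sig ((φ k) x)⟫_ℝ := by
    rw [hmx, ← phi_symm φ k]
  have hkk : ⟪x, (φ (k * k)) x⟫_ℝ = ‖(φ k) x‖^2 := by
    rw [map_mul]
    have : (φ k * φ k) x = (φ k) ((φ k) x) := rfl
    rw [this, ← phi_symm φ k, real_inner_self_eq_norm_sq]
  rw [map_sub, map_smul, ContinuousLinearMap.sub_apply, ContinuousLinearMap.smul_apply,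
    inner_sub_right, real_inner_smul_right, hkk, hmq] at hpos
  have hq := hSigPos ((φ k) x)
  have : ‖(φ k) x‖^2 ≤ 0 := by nlinarith
  have : ‖(φ k) x‖ = 0 := by nlinarith [norm_nonneg ((φ k) x)]
  exact norm_eq_zero.mp this

lemma phi_neg_zero (Sig : H →L[ℝ] H) (hφid : φ (ContinuousMap.id ℝ) = Sig)
    (hSigPos : ∀ f : H, 0 ≤ ⟪f, Sig f⟫_ℝ) {ε : ℝ} (hε : 0 < ε)
    (f : C(ℝ, ℝ)) (hf : ∀ t, -ε ≤ t → f t = 0) (x : H) : (φ f) x = 0 := by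
  have hfk : f = f * cutk ε := by
    ext t
    rcases le_or_gt t (-ε) with h | h
    · simp [ContinuousMap.mul_apply, cutk_eq_one hε h]
    · simp [ContinuousMap.mul_apply, hf t h.le]
  rw [hfk, map_mul]
  show (φ f) ((φ (cutk ε)) x) = 0
  rw [phi_cutk_zero φ Sig hφid hSigPos hε x, map_zero]

lemma phi_pos_on (Sig : H →L[ℝ] H) (hφid : φ (ContinuousMap.id ℝ) = Sig)
    (hSigPos : ∀ f : H, 0 ≤ ⟪f, Sig f⟫_ℝ) {ε : ℝ} (hε : 0 < ε)
    (f : C(ℝ, ℝ)) (hf : ∀ t, -ε ≤ t → 0 ≤ f t) (x : H) : 0 ≤ ⟪x, (φ f) x⟫_ℝ := by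
  set k := cutk ε with hk
  have hsplit : f = f * (1 - k) + f * k := by ring
  have h1 : ∀ t, 0 ≤ (f * (1 - k)) t := by
    intro t
    have hle := cutk_le_one ε t
    have : (f * (1 - k)) t = f t * (1 - k t) := rfl
    rw [this]
    rcases le_or_gt t (-ε) with h | h
    · rw [cutk_eq_one hε h]; simp
    · exact mul_nonneg (hf t h.le) (by linarith)
  have h2 : (φ (f * k)) x = 0 := by
    refine phi_neg_zero φ Sig hφid hSigPos (by positivity : (0:ℝ) < ε/2) _ ?_ x
    intro t ht
    have : k t = 0 := cutk_eq_zero hε (by linarith)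
    show f t * k t = 0
    rw [this, mul_zero]
  calc (0:ℝ) ≤ ⟪x, (φ (f * (1 - k))) x⟫_ℝ := phi_pos φ _ h1 x
  _ = ⟪x, (φ (f * (1 - k))) x⟫_ℝ + ⟪x, (φ (f * k)) x⟫_ℝ := by rw [h2, inner_zero_right]; ring
  _ = ⟪x, (φ f) x⟫_ℝ := by
      rw [← inner_add_right, ← ContinuousLinearMap.add_apply, ← map_add, ← hsplit]

end Aux

lemma pointwise_interp {θ μ δ : ℝ} (hθ0 : 0 ≤ θ) (hθ1 : θ ≤ 1) (hμ : 0 < μ) (hδ : 0 < δ) :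
    ∃ ε > 0, ∀ t : ℝ, -ε ≤ t →
      (t ^ (θ/2)) * (t ^ (θ/2)) ≤ θ * μ ^ (θ-1) * t + (1-θ) * μ ^ θ + δ := by
  have hnonneg : ∀ t : ℝ, 0 ≤ t →
      (t ^ (θ/2)) * (t ^ (θ/2)) ≤ θ * μ ^ (θ-1) * t + (1-θ) * μ ^ θ := by
    intro t ht
    have hsq : (t ^ (θ/2)) * (t ^ (θ/2)) = t ^ θ := by
      have e : θ/2 * (2:ℝ) = θ := by ring
      rw [← pow_two, ← Real.rpow_natCast (t ^ (θ/2)) 2, ← Real.rpow_mul ht]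
      norm_num
    rw [hsq]
    have hgm := Real.geom_mean_le_arith_mean2_weighted hθ0 (by linarith : (0:ℝ) ≤ 1 - θ)
      ht hμ.le (by ring)
    -- t ^ θ * μ ^ (1 - θ) ≤ θ * t + (1 - θ) * μ ;  multiply by μ^(θ-1) > 0
    have hp : (0:ℝ) < μ ^ (θ-1) := Real.rpow_pos_of_pos hμ _
    have hmul := mul_le_mul_of_nonneg_right hgm hp.le
    have e1 : t ^ θ * μ ^ (1-θ) * μ ^ (θ-1) = t ^ θ := by
      rw [mul_assoc, ← Real.rpow_add hμ]
      norm_num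
    have e2 : μ ^ (θ-1) * μ = μ ^ θ := by
      nth_rewrite 2 [← Real.rpow_one μ]
      rw [← Real.rpow_add hμ]
      norm_num
    calc t ^ θ = t ^ θ * μ ^ (1-θ) * μ ^ (θ-1) := e1.symm
    _ ≤ (θ * t + (1-θ) * μ) * μ ^ (θ-1) := hmul
    _ = θ * μ ^ (θ-1) * t + (1-θ) * (μ ^ (θ-1) * μ) := by ring
    _ = θ * μ ^ (θ-1) * t + (1-θ) * μ ^ θ := by rw [e2]
  rcases eq_or_lt_of_le hθ0 with h0 | h0
  · -- θ = 0 : LHS = 1, RHS = μ^0 + δ = 1 + δ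
    refine ⟨1, one_pos, fun t ht => ?_⟩
    rw [← h0]
    norm_num
    linarith
  · -- θ > 0 : continuity at 0
    set G : ℝ → ℝ := fun t => (t ^ (θ/2)) * (t ^ (θ/2)) - θ * μ ^ (θ-1) * t with hG
    have hGc : Continuous G := by
      have : Continuous fun t : ℝ => t ^ (θ/2) := Real.continuous_rpow_const (by linarith)
      fun_prop
    have hG0 : G 0 = 0 := by
      simp only [hG]
      rw [Real.zero_rpow (by positivity : θ/2 ≠ 0)]
      ring
    have hc : G 0 < (1-θ) * μ ^ θ + δ := by
      rw [hG0]
      have : 0 ≤ (1-θ) * μ ^ θ := mul_nonneg (by linarith) (Real.rpow_pos_of_pos hμ _).le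
      linarith
    have hev : ∀ᶠ t in nhds (0:ℝ), G t < (1-θ) * μ ^ θ + δ :=
      (hGc.continuousAt).eventually_lt continuousAt_const hc
    rcases Metric.eventually_nhds_iff.mp hev with ⟨ε, hε, hball⟩
    refine ⟨ε/2, by positivity, fun t ht => ?_⟩
    rcases le_or_gt 0 t with h | h
    · linarith [hnonneg t h]
    · have : dist t 0 < ε := by
        rw [Real.dist_eq, sub_zero, abs_of_neg h]
        linarith
      have := hball this
      simp only [hG] at this
      linarith



lemma final_arith (a n B lam γ θ W : ℝ) (ha : 0 ≤ a) (hBnn : 0 ≤ B) (hWnn : 0 ≤ W)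
    (hlam : 0 < lam) (hγ0 : 0 ≤ γ) (hγ1 : γ < 1) (hθ0 : 0 ≤ θ) (hθ1 : θ ≤ 1)
    (hE1 : (1-γ) * a^2 + lam * n^2 ≤ lam * (B * W))
    (hE2 : ∀ μ : ℝ, 0 < μ → B^2 ≤ θ * μ^(θ-1) * a^2 + (1-θ) * μ^θ * n^2) :
    a ≤ lam ^ ((1 + θ) / 2) / (1 - γ) * W := by
  have h1γ : (0:ℝ) < 1 - γ := by linarith
  set c := lam / (1-γ) with hc
  have hcpos : 0 < c := by positivity
  have hclam : (1-γ) * c = lam := by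
    rw [hc, mul_div_assoc', mul_comm, mul_div_assoc, div_self h1γ.ne', mul_one]
  have hrhs_nonneg : (0:ℝ) ≤ lam ^ ((1 + θ) / 2) / (1 - γ) * W := by positivity
  have hA2 : (1-γ) * a^2 ≤ lam * (B * W) := by nlinarith [sq_nonneg n]
  have ha2c : a^2 ≤ c * (B * W) := by nlinarith
  have hn2 : n^2 ≤ B * W := by nlinarith
  rcases eq_or_lt_of_le hBnn with hB0 | hB0
  · have hz : (1-γ) * a^2 ≤ 0 := by
      rw [← hB0] at hA2
      simpa using hA2
    have ha0 : a = 0 := by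
      by_contra h
      have hapos : 0 < a := lt_of_le_of_ne ha (Ne.symm h)
      nlinarith [mul_pos hapos hapos]
    exact ha0.le.trans hrhs_nonneg
  · have hE2c := hE2 c hcpos
    have hcθ1 : (0:ℝ) ≤ θ * c^(θ-1) :=
      mul_nonneg hθ0 (Real.rpow_pos_of_pos hcpos _).le
    have hcθ2 : (0:ℝ) ≤ (1-θ) * c^θ :=
      mul_nonneg (by linarith) (Real.rpow_pos_of_pos hcpos _).le
    have hcc : c^(θ-1) * c = c^θ := by
      nth_rewrite 2 [← Real.rpow_one c]
      rw [← Real.rpow_add hcpos]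
      norm_num
    have hB2 : B^2 ≤ c^θ * (B * W) := by
      have h1 : θ * c^(θ-1) * a^2 ≤ θ * c^(θ-1) * (c * (B * W)) :=
        mul_le_mul_of_nonneg_left ha2c hcθ1
      have h2 : (1-θ) * c^θ * n^2 ≤ (1-θ) * c^θ * (B * W) :=
        mul_le_mul_of_nonneg_left hn2 hcθ2
      have h3 : θ * c^(θ-1) * (c * (B * W)) = θ * (c^(θ-1) * c) * (B * W) := by ring
      rw [h3, hcc] at h1
      nlinarith
    have hBle : B ≤ c^θ * W := by nlinarith
    have ha2 : a^2 ≤ c^(1+θ) * W^2 := by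
      have h1 : c^(1+θ) = c * c^θ := by
        rw [Real.rpow_add hcpos, Real.rpow_one]
      have h2 : c * (B * W) ≤ c * (c^θ * W * W) := by
        apply mul_le_mul_of_nonneg_left _ hcpos.le
        exact mul_le_mul_of_nonneg_right hBle hWnn
      calc a^2 ≤ c * (B * W) := ha2c
      _ ≤ c * (c^θ * W * W) := h2
      _ = c^(1+θ) * W^2 := by rw [h1]; ring
    have hy : a ≤ c^((1+θ)/2) * W := by
      have hysq : (c^((1+θ)/2) * W)^2 = c^(1+θ) * W^2 := by
        rw [mul_pow, ← Real.rpow_natCast (c^((1+θ)/2)) 2, ← Real.rpow_mul hcpos.le]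
        norm_num
      have hynn : 0 ≤ c^((1+θ)/2) * W :=
        mul_nonneg (Real.rpow_pos_of_pos hcpos _).le hWnn
      nlinarith
    refine le_trans hy ?_
    have hsplit : c^((1+θ)/2) = lam^((1+θ)/2) / (1-γ)^((1+θ)/2) := by
      rw [hc, Real.div_rpow hlam.le h1γ.le]
    have hpow : (1-γ) ≤ (1-γ)^((1+θ)/2) := by
      nth_rewrite 1 [← Real.rpow_one (1-γ)]
      exact Real.rpow_le_rpow_of_exponent_ge h1γ (by linarith) (by linarith)
    have hfrac : lam^((1+θ)/2) / (1-γ)^((1+θ)/2) ≤ lam^((1+θ)/2) / (1-γ) := by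
      rw [div_le_div_iff₀ (Real.rpow_pos_of_pos h1γ _) h1γ]
      exact mul_le_mul_of_nonneg_left hpow (Real.rpow_nonneg hlam.le _)
    rw [hsplit]
    exact mul_le_mul_of_nonneg_right hfrac hWnn

theorem regularized_fixed_point_source_condition_rate
    {H : Type*} [NormedAddCommGroup H] [InnerProductSpace ℝ H] [CompleteSpace H]
    (Sig S T1 Sig1 : H →L[ℝ] H)
    (hSigSA : IsSelfAdjoint Sig) (hSigPos : ∀ f : H, 0 ≤ ⟪f, Sig f⟫_ℝ)
    (hSsa : IsSelfAdjoint S) (hSpos : ∀ f : H, 0 ≤ ⟪f, S f⟫_ℝ) (hSsq : S * S = Sig)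
    (hT1 : ‖T1‖ ≤ 1) (hSig1 : Sig1 = S * T1 * S)
    (γ : ℝ) (hγ0 : 0 ≤ γ) (hγ1 : γ < 1) (b : H)
    (φ : C(ℝ, ℝ) →⋆ₐ[ℝ] (H →L[ℝ] H)) (hφcont : Continuous φ)
    (hφid : φ (ContinuousMap.id ℝ) = Sig)
    (lam : ℝ) (hlam : 0 < lam)
    (Vlam : H) (hVlam : (Sig + lam • 1 - γ • Sig1) Vlam = b)
    (Vstar : H) (hVstar : b + (γ • Sig1 - Sig) Vstar = 0)
    (θ : ℝ) (hθ0 : 0 ≤ θ) (hθ1 : θ ≤ 1) (W : H)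
    (hW : Vstar =
      (φ ⟨fun t : ℝ => t ^ (θ / 2), Real.continuous_rpow_const (by linarith)⟩) W) :
    ‖S (Vlam - Vstar)‖ ≤ lam ^ ((1 + θ) / 2) / (1 - γ) * ‖W‖ := by
  have h1γ : (0:ℝ) < 1 - γ := by linarith
  set g : C(ℝ, ℝ) := ⟨fun t : ℝ => t ^ (θ / 2), Real.continuous_rpow_const (by linarith)⟩
    with hgdef
  have hWg : Vstar = (φ g) W := hW
  set D := Vlam - Vstar with hD
  -- symmetry of S
  have hSsym : ∀ x y : H, ⟪S x, y⟫_ℝ = ⟪x, S y⟫_ℝ :=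
    fun x y => (ContinuousLinearMap.isSelfAdjoint_iff_isSymmetric.mp hSsa) x y
  -- the key identity
  have hb1 : Sig Vlam + lam • Vlam - γ • Sig1 Vlam = b := by
    simpa [ContinuousLinearMap.sub_apply, ContinuousLinearMap.add_apply,
      ContinuousLinearMap.smul_apply, ContinuousLinearMap.one_apply] using hVlam
  have hb2 : b + γ • Sig1 Vstar - Sig Vstar = 0 := by
    simpa [ContinuousLinearMap.sub_apply, ContinuousLinearMap.add_apply,
      ContinuousLinearMap.smul_apply, add_sub_assoc] using hVstar
  have hSv : Sig Vstar = b + γ • Sig1 Vstar := by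
    rw [sub_eq_zero] at hb2; exact hb2.symm
  have heq : Sig D + lam • D - γ • Sig1 D = -(lam • Vstar) := by
    rw [hD, map_sub, map_sub, hSv, ← hb1]
    module
  -- quadratic form of key identity
  have hSigD : ⟪D, Sig D⟫_ℝ = ‖S D‖^2 := by
    rw [← hSsq]
    have : (S * S) D = S (S D) := rfl
    rw [this, ← hSsym, real_inner_self_eq_norm_sq]
  have hSig1D : ⟪D, Sig1 D⟫_ℝ = ⟪S D, T1 (S D)⟫_ℝ := by
    rw [hSig1]
    have : (S * T1 * S) D = S (T1 (S D)) := rfl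
    rw [this, ← hSsym]
  have hinner : ‖S D‖^2 + lam * ‖D‖^2 - γ * ⟪S D, T1 (S D)⟫_ℝ = -(lam * ⟪D, Vstar⟫_ℝ) := by
    have h := congrArg (fun y => ⟪D, y⟫_ℝ) heq
    simp only [inner_sub_right, inner_add_right, real_inner_smul_right, inner_neg_right] at h
    rw [hSigD, hSig1D, real_inner_self_eq_norm_sq] at h
    exact h
  -- bound on T1 term
  have hT1b : ⟪S D, T1 (S D)⟫_ℝ ≤ ‖S D‖^2 := by
    have h1 := real_inner_le_norm (S D) (T1 (S D))
    have h2 := T1.le_opNorm (S D)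
    nlinarith [norm_nonneg (S D), norm_nonneg (T1 (S D))]
  -- RHS bound
  have hVD : ⟪D, Vstar⟫_ℝ = ⟪(φ g) D, W⟫_ℝ := by
    rw [hWg, ← phi_symm]
  have hrhs : -(lam * ⟪D, Vstar⟫_ℝ) ≤ lam * (‖(φ g) D‖ * ‖W‖) := by
    rw [hVD]
    have h1 := abs_real_inner_le_norm ((φ g) D) W
    have h2 := neg_abs_le (⟪(φ g) D, W⟫_ℝ)
    nlinarith
  -- E1
  have hE1 : (1-γ) * ‖S D‖^2 + lam * ‖D‖^2 ≤ lam * (‖(φ g) D‖ * ‖W‖) := by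
    have h3 : γ * ⟪S D, T1 (S D)⟫_ℝ ≤ γ * ‖S D‖^2 :=
      mul_le_mul_of_nonneg_left hT1b hγ0
    nlinarith
  -- E2 : interpolation inequality
  have hE2 : ∀ μ : ℝ, 0 < μ →
      ‖(φ g) D‖^2 ≤ θ * μ^(θ-1) * ‖S D‖^2 + (1-θ) * μ^θ * ‖D‖^2 := by
    intro μ hμ
    have base : ∀ δ : ℝ, 0 < δ →
        ‖(φ g) D‖^2 ≤ θ * μ^(θ-1) * ‖S D‖^2 + (1-θ) * μ^θ * ‖D‖^2 + δ * ‖D‖^2 := by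
      intro δ hδ
      obtain ⟨ε, hε, hpt⟩ := pointwise_interp hθ0 hθ1 hμ hδ
      set f : C(ℝ, ℝ) := (θ * μ^(θ-1)) • ContinuousMap.id ℝ + ((1-θ) * μ^θ + δ) • 1 - g * g
        with hfdef
      have hfpos : ∀ t : ℝ, -ε ≤ t → 0 ≤ f t := by
        intro t ht
        have h := hpt t ht
        have hft : f t = θ * μ^(θ-1) * t + ((1-θ) * μ^θ + δ) * 1 - t ^ (θ/2) * t ^ (θ/2) := rfl
        rw [hft]
        linarith
      have hq := phi_pos_on φ Sig hφid hSigPos hε f hfpos D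
      have hgg : ⟪D, (φ (g * g)) D⟫_ℝ = ‖(φ g) D‖^2 := by
        rw [map_mul]
        have : (φ g * φ g) D = (φ g) ((φ g) D) := rfl
        rw [this, ← phi_symm, real_inner_self_eq_norm_sq]
      have hφf : φ f = (θ * μ^(θ-1)) • Sig + ((1-θ) * μ^θ + δ) • 1 - φ (g * g) := by
        rw [hfdef, map_sub, map_add, map_smul, map_smul, map_one, hφid]
      have hq2 : (0:ℝ) ≤ θ * μ^(θ-1) * ⟪D, Sig D⟫_ℝ + ((1-θ) * μ^θ + δ) * ⟪D, D⟫_ℝ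
          - ⟪D, (φ (g * g)) D⟫_ℝ := by
        have e : (φ f) D = (θ * μ^(θ-1)) • Sig D + ((1-θ) * μ^θ + δ) • D
            - (φ (g * g)) D := by
          rw [hφf]; rfl
        rw [e, inner_sub_right, inner_add_right, real_inner_smul_right,
          real_inner_smul_right] at hq
        linarith
      rw [hSigD, real_inner_self_eq_norm_sq, hgg] at hq2
      linarith
    refine le_of_forall_pos_le_add fun η hη => ?_
    have hδ : (0:ℝ) < η / (‖D‖^2 + 1) := by positivity
    have h := base _ hδ
    have h2 : η / (‖D‖^2 + 1) * ‖D‖^2 ≤ η := by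
      rw [div_mul_eq_mul_div, div_le_iff₀ (by positivity)]
      nlinarith [sq_nonneg ‖D‖]
    linarith
  exact final_arith ‖S D‖ ‖D‖ ‖(φ g) D‖ lam γ θ ‖W‖ (norm_nonneg _) (norm_nonneg _)
    (norm_nonneg _) hlam hγ0 hγ1 hθ0 hθ1 hE1 hE2
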